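/- The refined relation G_{(4,0,1)}(z,q) = G_{(3,1,1)}(zq,q) + zq·G_{(4,1,0)}(zq^2,q), where for each profile c, G_c(z,q) := (zq;q)_∞ F_c(z,q) and F_c is the two-variable generating function of cylindric partitions of profile c. -/

import Mathlib

open scoped Finset

/-- A cylindric partition with profile `c = (c₁, …, c_k)` (0-indexed): a `k`-tuple of
partitions `λ⁽ⁱ⁾` (antitone, eventually-zero sequences of naturals, 0-indexed) with
`λ⁽ⁱ⁾ⱼ ≥ λ⁽ⁱ⁺¹⁾_{j + c_{i+1}}` cyclically. -/
structure CylindricPartition (k : ℕ) [NeZero k] (c : Fin k → ℕ) where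
  part : Fin k → ℕ → ℕ
  antitone : ∀ i, Antitone (part i)
  finite_support : ∀ i, ∃ N, ∀ j, N ≤ j → part i j = 0
  cyl : ∀ i j, part (i + 1) (j + c (i + 1)) ≤ part i j

namespace CylindricPartition

variable {k : ℕ} [NeZero k] {c : Fin k → ℕ}

/-- The size `|Λ|`: the sum of all parts. -/
noncomputable def size (Λ : CylindricPartition k c) : ℕ :=
  ∑' (i : Fin k) (j : ℕ), Λ.part i j

/-- The largest part `max(Λ)`. -/
def maxPart (Λ : CylindricPartition k c) : ℕ :=
  Finset.univ.sup fun i => Λ.part i 0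

end CylindricPartition
noncomputable instance : TopologicalSpace (MvPowerSeries (Fin 2) ℚ) :=
  Pi.topologicalSpace (ι := Fin 2 →₀ ℕ) (Y := fun _ => ℚ)

/-- The formal variable `z`. -/
noncomputable def z : MvPowerSeries (Fin 2) ℚ := MvPowerSeries.X 0

/-- The formal variable `q`. -/
noncomputable def q : MvPowerSeries (Fin 2) ℚ := MvPowerSeries.X 1

/-- The two-variable generating function of cylindric partitions of profile `c`, evaluated at
an arbitrary first argument `Z`:  `F_c(Z, q) = Σ_Λ Z^{max(Λ)} q^{|Λ|}`. -/
noncomputable def cylGF (k : ℕ) [NeZero k] (c : Fin k → ℕ) (Z : MvPowerSeries (Fin 2) ℚ) :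
    MvPowerSeries (Fin 2) ℚ :=
  ∑' Λ : CylindricPartition k c, Z ^ Λ.maxPart * q ^ Λ.size

/-- `G_c(Z, q) := (Zq; q)_∞ F_c(Z, q)`. -/
noncomputable def cylG (k : ℕ) [NeZero k] (c : Fin k → ℕ) (Z : MvPowerSeries (Fin 2) ℚ) :
    MvPowerSeries (Fin 2) ℚ :=
  (∏' m : ℕ, (1 - Z * q ^ (m + 1))) * cylGF k c Z

/-! ### Topological instances for the Pi topology on `MvPowerSeries (Fin 2) ℚ` -/

instance : T2Space (MvPowerSeries (Fin 2) ℚ) :=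
  inferInstanceAs (T2Space ((Fin 2 →₀ ℕ) → ℚ))

instance : ContinuousAdd (MvPowerSeries (Fin 2) ℚ) :=
  inferInstanceAs (ContinuousAdd ((Fin 2 →₀ ℕ) → ℚ))

instance : ContinuousMul (MvPowerSeries (Fin 2) ℚ) := by
  constructor
  apply continuous_pi
  intro d
  have h : (fun p : MvPowerSeries (Fin 2) ℚ × MvPowerSeries (Fin 2) ℚ => (p.1 * p.2) d)
      = fun p => ∑ x ∈ Finset.HasAntidiagonal.antidiagonal d, p.1 x.1 * p.2 x.2 := by
    funext p
    exact MvPowerSeries.coeff_mul (n := d) (φ := p.1) (ψ := p.2)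
  rw [h]
  exact continuous_finset_sum _ fun x _ =>
    ((continuous_apply x.1).comp continuous_fst).mul ((continuous_apply x.2).comp continuous_snd)

instance : IsTopologicalSemiring (MvPowerSeries (Fin 2) ℚ) := ⟨⟩

/-! ### Monomials and summability -/

/-- The monomial `z^t q^n`. -/
noncomputable def mono (t n : ℕ) : MvPowerSeries (Fin 2) ℚ :=
  MvPowerSeries.monomial (Finsupp.single 0 t + Finsupp.single 1 n) 1

lemma z_pow_mul_q_pow (t n : ℕ) : z ^ t * q ^ n = mono t n := by
  rw [z, q, mono, MvPowerSeries.X_pow_eq, MvPowerSeries.X_pow_eq,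
    MvPowerSeries.monomial_mul_monomial, one_mul]

lemma mono_apply (t n : ℕ) (d : Fin 2 →₀ ℕ) :
    (mono t n) d = if Finsupp.single 0 t + Finsupp.single (1 : Fin 2) n = d then 1 else 0 := by
  have := MvPowerSeries.coeff_monomial (R := ℚ) d
    (Finsupp.single 0 t + Finsupp.single (1 : Fin 2) n) 1
  rw [MvPowerSeries.coeff_apply] at this
  rw [mono, this]
  by_cases h : Finsupp.single (0 : Fin 2) t + Finsupp.single (1 : Fin 2) n = d
  · simp [h]
  · simp [h, Ne.symm h]

lemma single_add_single_apply₀ (t n : ℕ) :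
    (Finsupp.single (0 : Fin 2) t + Finsupp.single (1 : Fin 2) n) 0 = t := by
  simp [Finsupp.single_apply]

lemma single_add_single_apply₁ (t n : ℕ) :
    (Finsupp.single (0 : Fin 2) t + Finsupp.single (1 : Fin 2) n) 1 = n := by
  simp [Finsupp.single_apply]

lemma summable_weights {ι : Type} (D : ι → ℕ × ℕ)
    (h : ∀ tn : ℕ × ℕ, {i | D i = tn}.Finite) :
    Summable (fun i => z ^ (D i).1 * q ^ (D i).2) := by
  have he : (fun i => z ^ (D i).1 * q ^ (D i).2) = fun i => mono (D i).1 (D i).2 :=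
    funext fun i => z_pow_mul_q_pow _ _
  rw [he]
  apply Pi.summable.2
  intro d
  apply summable_of_ne_finset_zero (s := (h (d 0, d 1)).toFinset)
  intro i hi
  rw [mono_apply, if_neg]
  intro heq
  apply hi
  rw [Set.Finite.mem_toFinset]
  have h0 := congrArg (fun f : Fin 2 →₀ ℕ => f 0) heq
  have h1 := congrArg (fun f : Fin 2 →₀ ℕ => f 1) heq
  simp only [single_add_single_apply₀, single_add_single_apply₁] at h0 h1
  show D i = (d 0, d 1)
  exact Prod.ext h0 h1

/-! ### Basic lemmas on cylindric partitions (k = 3) -/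

namespace CylindricPartition

variable {c : Fin 3 → ℕ}

theorem ext' {Λ Μ : CylindricPartition 3 c} (h : Λ.part = Μ.part) : Λ = Μ := by
  cases Λ; cases Μ; simpa using h

lemma part_zero_le_maxPart (Λ : CylindricPartition 3 c) (i : Fin 3) :
    Λ.part i 0 ≤ Λ.maxPart :=
  Finset.le_sup (f := fun i => Λ.part i 0) (Finset.mem_univ i)

lemma maxPart_le_iff {Λ : CylindricPartition 3 c} {T : ℕ} :
    Λ.maxPart ≤ T ↔ ∀ i, Λ.part i 0 ≤ T := by
  simp [maxPart]

lemma exists_bound (Λ : CylindricPartition 3 c) :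
    ∃ N, ∀ i j, N ≤ j → Λ.part i j = 0 := by
  obtain ⟨N0, h0⟩ := Λ.finite_support 0
  obtain ⟨N1, h1⟩ := Λ.finite_support 1
  obtain ⟨N2, h2⟩ := Λ.finite_support 2
  refine ⟨N0 + N1 + N2, fun i j hj => ?_⟩
  fin_cases i
  · exact h0 j (by omega)
  · exact h1 j (by omega)
  · exact h2 j (by omega)

lemma size_eq_sum (Λ : CylindricPartition 3 c) {N : ℕ}
    (h : ∀ i j, N ≤ j → Λ.part i j = 0) :
    Λ.size = ∑ i : Fin 3, ∑ j ∈ Finset.range N, Λ.part i j := by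
  rw [size, tsum_fintype]
  refine Finset.sum_congr rfl fun i _ => ?_
  exact tsum_eq_sum fun j hj => h i j (by simpa [Finset.mem_range, not_lt] using hj)

lemma sum_range_le_size (Λ : CylindricPartition 3 c) (i : Fin 3) (N : ℕ) :
    (∑ j ∈ Finset.range N, Λ.part i j) ≤ Λ.size := by
  obtain ⟨M, hM⟩ := Λ.exists_bound
  have hb : ∀ i' j, N + M ≤ j → Λ.part i' j = 0 := fun i' j hj => hM i' j (by omega)
  rw [Λ.size_eq_sum hb]
  calc (∑ j ∈ Finset.range N, Λ.part i j)
      ≤ ∑ j ∈ Finset.range (N + M), Λ.part i j :=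
        Finset.sum_le_sum_of_subset (Finset.range_subset_range.2 (by omega))
    _ ≤ ∑ i : Fin 3, ∑ j ∈ Finset.range (N + M), Λ.part i j :=
        Finset.single_le_sum (f := fun i => ∑ j ∈ Finset.range (N + M), Λ.part i j)
          (fun _ _ => Nat.zero_le _) (Finset.mem_univ i)

lemma part_le_size (Λ : CylindricPartition 3 c) (i : Fin 3) (j : ℕ) :
    Λ.part i j ≤ Λ.size := by
  calc Λ.part i j ≤ ∑ j' ∈ Finset.range (j + 1), Λ.part i j' :=
        Finset.single_le_sum (f := fun j' => Λ.part i j') (fun _ _ => Nat.zero_le _)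
          (Finset.mem_range.2 (by omega))
    _ ≤ Λ.size := Λ.sum_range_le_size i _

lemma part_eq_zero_of_size_le {Λ : CylindricPartition 3 c} {n : ℕ} (h : Λ.size ≤ n)
    (i : Fin 3) (j : ℕ) (hj : n ≤ j) : Λ.part i j = 0 := by
  by_contra hne
  have h1 : ∀ j' ∈ Finset.range (j + 1), 1 ≤ Λ.part i j' := by
    intro j' hj'
    have : Λ.part i j ≤ Λ.part i j' := Λ.antitone i (by simpa [Finset.mem_range, Nat.lt_succ_iff] using hj')
    omega
  have h2 : (j + 1) * 1 ≤ ∑ j' ∈ Finset.range (j + 1), Λ.part i j' := by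
    simpa using Finset.card_nsmul_le_sum (Finset.range (j + 1)) _ 1 h1
  have h3 := Λ.sum_range_le_size i (j + 1)
  omega

lemma finite_size_le (c : Fin 3 → ℕ) (n : ℕ) :
    {Λ : CylindricPartition 3 c | Λ.size ≤ n}.Finite := by
  have : Finite (Fin 3 → Fin (n + 1) → Fin (n + 1)) := inferInstance
  apply Set.Finite.of_finite_image (f := fun Λ => fun (i : Fin 3) (j : Fin (n + 1)) =>
    (⟨min (Λ.part i j.val) n, by omega⟩ : Fin (n + 1)))
  · exact Set.toFinite _
  · intro Λ hΛ Μ hΜ hfe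
    apply ext'
    funext i j
    by_cases hj : j ≤ n
    · have := congrFun (congrFun hfe i) ⟨j, by omega⟩
      have h1 : Λ.part i j ≤ n := le_trans (Λ.part_le_size i j) hΛ
      have h2 : Μ.part i j ≤ n := le_trans (Μ.part_le_size i j) hΜ
      have := congrArg Fin.val this
      simp only [Fin.val_mk] at this
      omega
    · rw [part_eq_zero_of_size_le hΛ i j (by omega), part_eq_zero_of_size_le hΜ i j (by omega)]

end CylindricPartition

/-! ### Dropping / prepending the top row of one component -/

namespace CylindricPartition

lemma fin3_succ_ne : ∀ i : Fin 3, i + 1 ≠ i := by decide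

section DropPrepend

variable (c c' : Fin 3 → ℕ) (i₀ : Fin 3)
variable (h1 : c i₀ = c' i₀ + 1) (h2 : c' (i₀ + 1) = c (i₀ + 1) + 1)
variable (h3 : ∀ i, i ≠ i₀ → i ≠ i₀ + 1 → c' i = c i)

/-- Remove the top row of component `i₀`. -/
def drop (Λ : CylindricPartition 3 c) : CylindricPartition 3 c' where
  part i j := if i = i₀ then Λ.part i₀ (j + 1) else Λ.part i j
  antitone i := by
    intro a b hab
    by_cases hi : i = i₀ <;> simp only [hi, ite_true, ite_false]
    · exact Λ.antitone i₀ (by omega)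
    · exact Λ.antitone i hab
  finite_support i := by
    obtain ⟨N, hN⟩ := Λ.exists_bound
    exact ⟨N, fun j hj => by
      by_cases hi : i = i₀ <;> simp only [hi, ite_true, ite_false]
      · exact hN i₀ (j + 1) (by omega)
      · exact hN i j hj⟩
  cyl i j := by
    by_cases hi : i = i₀
    · have hne : i + 1 ≠ i₀ := fun hcon => fin3_succ_ne i (hcon.trans hi.symm)
      simp only [if_neg hne, if_pos hi]
      have e2 : c' (i + 1) = c (i + 1) + 1 := by rw [hi]; exact h2
      have hidx : j + c' (i + 1) = (j + 1) + c (i + 1) := by omega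
      rw [hidx, ← hi]
      exact Λ.cyl i (j + 1)
    · by_cases hi1 : i + 1 = i₀
      · simp only [if_pos hi1, if_neg hi]
        have e1 : c (i + 1) = c' (i + 1) + 1 := by rw [hi1]; exact h1
        have hidx : (j + c' (i + 1)) + 1 = j + c (i + 1) := by omega
        rw [hidx, ← hi1]
        exact Λ.cyl i j
      · simp only [if_neg hi1, if_neg hi]
        rw [h3 (i + 1) hi1 (fun hcon => hi (add_right_cancel hcon))]
        exact Λ.cyl i j

/-- Prepend a new top row `T` to component `i₀`. -/
def prepend (Λ' : CylindricPartition 3 c') (T : ℕ) (hT : Λ'.maxPart ≤ T) :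
    CylindricPartition 3 c where
  part i j := if i = i₀ then (match j with | 0 => T | (j' + 1) => Λ'.part i₀ j') else Λ'.part i j
  antitone i := by
    by_cases hi : i = i₀ <;> simp only [hi, ite_true, ite_false]
    · apply antitone_nat_of_succ_le
      intro n
      match n with
      | 0 => exact le_trans (Λ'.part_zero_le_maxPart i₀) hT
      | (n' + 1) => exact Λ'.antitone i₀ (by omega)
    · exact Λ'.antitone i
  finite_support i := by
    obtain ⟨N, hN⟩ := Λ'.exists_bound
    refine ⟨N + 1, fun j hj => ?_⟩
    by_cases hi : i = i₀ <;> simp only [hi, ite_true, ite_false]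
    · match j, hj with
      | (j' + 1), hj => exact hN i₀ j' (by omega)
    · exact hN i j (by omega)
  cyl i j := by
    by_cases hi : i = i₀
    · have hne : i + 1 ≠ i₀ := fun hcon => fin3_succ_ne i (hcon.trans hi.symm)
      simp only [if_neg hne, if_pos hi]
      cases j with
      | zero =>
        exact le_trans (Λ'.antitone (i + 1) (Nat.zero_le _))
          (le_trans (Λ'.part_zero_le_maxPart (i + 1)) hT)
      | succ j' =>
        show Λ'.part (i + 1) ((j' + 1) + c (i + 1)) ≤ Λ'.part i₀ j'
        have e2 : c' (i + 1) = c (i + 1) + 1 := by rw [hi]; exact h2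
        have hidx : (j' + 1) + c (i + 1) = j' + c' (i + 1) := by omega
        rw [hidx, ← hi]
        exact Λ'.cyl i j'
    · by_cases hi1 : i + 1 = i₀
      · simp only [if_pos hi1, if_neg hi]
        have e1 : c (i + 1) = c' (i + 1) + 1 := by rw [hi1]; exact h1
        have hidx : j + c (i + 1) = (j + c' (i + 1)) + 1 := by omega
        rw [hidx]
        show Λ'.part i₀ (j + c' (i + 1)) ≤ Λ'.part i j
        rw [← hi1]
        exact Λ'.cyl i j
      · simp only [if_neg hi1, if_neg hi]
        rw [← h3 (i + 1) hi1 (fun hcon => hi (add_right_cancel hcon))]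
        exact Λ'.cyl i j

variable {c c' i₀}

lemma part_drop_self (Λ : CylindricPartition 3 c) (j : ℕ) :
    (drop c c' i₀ h1 h2 h3 Λ).part i₀ j = Λ.part i₀ (j + 1) := by simp [drop]

lemma part_drop_other (Λ : CylindricPartition 3 c) {i : Fin 3} (hi : i ≠ i₀) (j : ℕ) :
    (drop c c' i₀ h1 h2 h3 Λ).part i j = Λ.part i j := by simp [drop, hi]

lemma part_prepend_zero (Λ' : CylindricPartition 3 c') (T : ℕ) (hT : Λ'.maxPart ≤ T) :
    (prepend c c' i₀ h1 h2 h3 Λ' T hT).part i₀ 0 = T := by simp [prepend]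

lemma part_prepend_succ (Λ' : CylindricPartition 3 c') (T : ℕ) (hT : Λ'.maxPart ≤ T) (j : ℕ) :
    (prepend c c' i₀ h1 h2 h3 Λ' T hT).part i₀ (j + 1) = Λ'.part i₀ j := by simp [prepend]

lemma part_prepend_other (Λ' : CylindricPartition 3 c') (T : ℕ) (hT : Λ'.maxPart ≤ T)
    {i : Fin 3} (hi : i ≠ i₀) (j : ℕ) :
    (prepend c c' i₀ h1 h2 h3 Λ' T hT).part i j = Λ'.part i j := by simp [prepend, hi]

lemma drop_prepend (Λ' : CylindricPartition 3 c') (T : ℕ) (hT : Λ'.maxPart ≤ T) :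
    drop c c' i₀ h1 h2 h3 (prepend c c' i₀ h1 h2 h3 Λ' T hT) = Λ' := by
  apply ext'
  funext i j
  by_cases hi : i = i₀
  · rw [hi, part_drop_self, part_prepend_succ]
  · rw [part_drop_other _ _ _ _ hi, part_prepend_other _ _ _ _ _ _ hi]

lemma prepend_drop (Λ : CylindricPartition 3 c) (T : ℕ) (h : Λ.part i₀ 0 = T)
    (hT : (drop c c' i₀ h1 h2 h3 Λ).maxPart ≤ T) :
    prepend c c' i₀ h1 h2 h3 (drop c c' i₀ h1 h2 h3 Λ) T hT = Λ := by
  apply ext'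
  funext i j
  by_cases hi : i = i₀
  · rw [hi]
    cases j with
    | zero => rw [part_prepend_zero]; exact h.symm
    | succ j' => rw [part_prepend_succ, part_drop_self]
  · rw [part_prepend_other _ _ _ _ _ _ hi, part_drop_other _ _ _ _ hi]

lemma maxPart_prepend_le (Λ' : CylindricPartition 3 c') (T : ℕ) (hT : Λ'.maxPart ≤ T) :
    (prepend c c' i₀ h1 h2 h3 Λ' T hT).maxPart ≤ T := by
  rw [maxPart_le_iff]
  intro i
  by_cases hi : i = i₀
  · rw [hi, part_prepend_zero]
  · rw [part_prepend_other _ _ _ _ _ _ hi]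
    exact le_trans (Λ'.part_zero_le_maxPart i) hT

lemma maxPart_drop_le (Λ : CylindricPartition 3 c) :
    (drop c c' i₀ h1 h2 h3 Λ).maxPart ≤ Λ.maxPart := by
  rw [maxPart_le_iff]
  intro i
  by_cases hi : i = i₀
  · rw [hi, part_drop_self]
    exact le_trans (Λ.antitone i₀ (Nat.zero_le 1)) (Λ.part_zero_le_maxPart i₀)
  · rw [part_drop_other _ _ _ _ hi]
    exact Λ.part_zero_le_maxPart i

lemma size_prepend (Λ' : CylindricPartition 3 c') (T : ℕ) (hT : Λ'.maxPart ≤ T) :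
    (prepend c c' i₀ h1 h2 h3 Λ' T hT).size = T + Λ'.size := by
  obtain ⟨N, hN⟩ := Λ'.exists_bound
  have hb' : ∀ i j, N + 1 ≤ j → Λ'.part i j = 0 := fun i j hj => hN i j (by omega)
  have hb : ∀ i j, N + 1 ≤ j → (prepend c c' i₀ h1 h2 h3 Λ' T hT).part i j = 0 := by
    intro i j hj
    by_cases hi : i = i₀
    · rw [hi]
      match j, hj with
      | (j' + 1), hj =>
        rw [part_prepend_succ]
        exact hN i₀ j' (by omega)
    · rw [part_prepend_other _ _ _ _ _ _ hi]
      exact hN i j (by omega)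
  rw [size_eq_sum _ hb, size_eq_sum _ hb']
  have key : ∀ i : Fin 3,
      (∑ j ∈ Finset.range (N + 1), (prepend c c' i₀ h1 h2 h3 Λ' T hT).part i j)
      = (if i = i₀ then T else 0) + ∑ j ∈ Finset.range (N + 1), Λ'.part i j := by
    intro i
    by_cases hi : i = i₀
    · rw [hi, if_pos rfl,
        Finset.sum_range_succ' (f := fun j => (prepend c c' i₀ h1 h2 h3 Λ' T hT).part i₀ j) N]
      simp only [part_prepend_succ, part_prepend_zero]
      rw [Finset.sum_range_succ (f := fun j => Λ'.part i₀ j) N, hN i₀ N (le_refl N)]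
      omega
    · rw [if_neg hi, zero_add]
      exact Finset.sum_congr rfl fun j _ => part_prepend_other _ _ _ _ _ _ hi j
  rw [Finset.sum_congr rfl fun i _ => key i, Finset.sum_add_distrib]
  congr 1
  rw [Finset.sum_ite_eq' Finset.univ i₀ (fun _ => T)]
  simp

end DropPrepend

end CylindricPartition

/-! ### The padded series V -/

open CylindricPartition

/-- Pairs `(Λ, T)` with `T ≥ max(Λ)`. -/
def CPairs (c : Fin 3 → ℕ) : Type :=
  {p : CylindricPartition 3 c × ℕ // p.1.maxPart ≤ p.2}

/-- Weight of a pair. -/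
noncomputable def wP (c : Fin 3 → ℕ) (a : ℕ) (p : CPairs c) : MvPowerSeries (Fin 2) ℚ :=
  z ^ p.1.2 * q ^ (a * p.1.2 + p.1.1.size)

/-- The padded series `V_c(z q^a) = F_c(zq^a)/(1-zq^a)`. -/
noncomputable def Vse (c : Fin 3 → ℕ) (a : ℕ) : MvPowerSeries (Fin 2) ℚ :=
  ∑' p : CPairs c, wP c a p

lemma CPairs.ext {c : Fin 3 → ℕ} {p p' : CPairs c} (h1 : p.1.1 = p'.1.1)
    (h2 : p.1.2 = p'.1.2) : p = p' :=
  Subtype.ext (by rw [Prod.ext_iff]; exact ⟨h1, h2⟩)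

lemma summable_wP (c : Fin 3 → ℕ) (a : ℕ) : Summable (wP c a) := by
  apply summable_weights (D := fun p : CPairs c => (p.1.2, a * p.1.2 + p.1.1.size))
  intro tn
  apply Set.Finite.of_finite_image (f := fun p : CPairs c => p.1.1)
  · apply Set.Finite.subset (CylindricPartition.finite_size_le c tn.2)
    rintro Λ ⟨p, hp, rfl⟩
    have h1 : a * p.1.2 + p.1.1.size = tn.2 := congrArg Prod.snd hp
    simp only [Set.mem_setOf_eq]
    omega
  · rintro p hp p' hp' he
    simp only [Set.mem_setOf_eq] at hp hp'
    apply CPairs.ext he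
    have h1 : p.1.2 = tn.1 := congrArg Prod.fst hp
    have h2 : p'.1.2 = tn.1 := congrArg Prod.fst hp'
    omega

lemma hasSum_wP (c : Fin 3 → ℕ) (a : ℕ) : HasSum (wP c a) (Vse c a) :=
  (summable_wP c a).hasSum

/-- The reindexed generating function `F_c(z q^a)` as a sum with separated exponents. -/
noncomputable def wG (c : Fin 3 → ℕ) (a : ℕ) (Λ : CylindricPartition 3 c) :
    MvPowerSeries (Fin 2) ℚ :=
  z ^ Λ.maxPart * q ^ (a * Λ.maxPart + Λ.size)

noncomputable def GFa (c : Fin 3 → ℕ) (a : ℕ) : MvPowerSeries (Fin 2) ℚ :=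
  ∑' Λ : CylindricPartition 3 c, wG c a Λ

lemma summable_wG (c : Fin 3 → ℕ) (a : ℕ) : Summable (wG c a) := by
  apply summable_weights (D := fun Λ : CylindricPartition 3 c =>
    (Λ.maxPart, a * Λ.maxPart + Λ.size))
  intro tn
  apply Set.Finite.subset (CylindricPartition.finite_size_le c tn.2)
  intro Λ hΛ
  have h1 : a * Λ.maxPart + Λ.size = tn.2 := congrArg Prod.snd hΛ
  simp only [Set.mem_setOf_eq]
  omega

lemma hasSum_wG (c : Fin 3 → ℕ) (a : ℕ) : HasSum (wG c a) (GFa c a) :=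
  (summable_wG c a).hasSum

lemma cylGF_eq_GFa (c : Fin 3 → ℕ) (a : ℕ) : cylGF 3 c (z * q ^ a) = GFa c a :=
  tsum_congr fun Λ => by rw [wG]; ring

/-! ### Sums over sum types -/

lemma HasSum.sumElim {α β : Type} {M : Type*} [AddCommMonoid M] [TopologicalSpace M]
    [ContinuousAdd M] {f : α → M} {g : β → M} {a b : M}
    (hf : HasSum f a) (hg : HasSum g b) : HasSum (Sum.elim f g) (a + b) := by
  have h1 : HasSum (Sum.elim f (0 : β → M)) a := by
    refine (Function.Injective.hasSum_iff Sum.inl_injective ?_).mp hf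
    rintro (x | x) hx
    · exact absurd ⟨x, rfl⟩ hx
    · rfl
  have h2 : HasSum (Sum.elim (0 : α → M) g) b := by
    refine (Function.Injective.hasSum_iff Sum.inr_injective ?_).mp hg
    rintro (x | x) hx
    · rfl
    · exact absurd ⟨x, rfl⟩ hx
  have he : Sum.elim f g = fun x => Sum.elim f (0 : β → M) x + Sum.elim (0 : α → M) g x := by
    funext x
    cases x <;> simp
  rw [he]
  exact h1.add h2

/-! ### Equation (E0): `F_c(zq^a) + zq^a V = V` -/

def equivE0 (c : Fin 3 → ℕ) : (CylindricPartition 3 c ⊕ CPairs c) ≃ CPairs c where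
  toFun x :=
    match x with
    | .inl Λ => ⟨(Λ, Λ.maxPart), le_refl _⟩
    | .inr ⟨(Λ, T), hT⟩ => ⟨(Λ, T + 1), by
        have h2 : Λ.maxPart ≤ T := hT
        exact le_trans h2 (Nat.le_succ _)⟩
  invFun p :=
    match p with
    | ⟨(Λ, T), hT⟩ =>
      if h : Λ.maxPart = T then .inl Λ
      else .inr ⟨(Λ, T - 1), by
        have h2 : Λ.maxPart ≤ T := hT
        show Λ.maxPart ≤ T - 1
        omega⟩
  left_inv x := by
    match x with
    | .inl Λ =>
      dsimp only
      rw [dif_pos rfl]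
    | .inr ⟨(Λ, T), hT⟩ =>
      have h2 : Λ.maxPart ≤ T := hT
      have hne : ¬ (Λ.maxPart = T + 1) := by omega
      dsimp only
      rw [dif_neg hne]
      exact congrArg Sum.inr (CPairs.ext rfl (show T + 1 - 1 = T by omega))
  right_inv p := by
    match p with
    | ⟨(Λ, T), hT⟩ =>
      have h2 : Λ.maxPart ≤ T := hT
      by_cases h : Λ.maxPart = T
      · dsimp only
        rw [dif_pos h]
        exact CPairs.ext rfl h
      · dsimp only
        rw [dif_neg h]
        exact CPairs.ext rfl (show T - 1 + 1 = T by omega)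

set_option maxHeartbeats 1000000 in
lemma E0eq (c : Fin 3 → ℕ) (a : ℕ) :
    GFa c a + (z * q ^ a) * Vse c a = Vse c a := by
  have hL : HasSum (fun x => wP c a (equivE0 c x)) (Vse c a) :=
    (Equiv.hasSum_iff (equivE0 c)).mpr (hasSum_wP c a)
  have hfun : (fun x => wP c a (equivE0 c x))
      = Sum.elim (wG c a) (fun p => (z * q ^ a) * wP c a p) := by
    funext x
    match x with
    | .inl Λ => rfl
    | .inr ⟨(Λ, T), hT⟩ =>
      show z ^ (T + 1) * q ^ (a * (T + 1) + Λ.size)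
        = (z * q ^ a) * (z ^ T * q ^ (a * T + Λ.size))
      ring
  rw [hfun] at hL
  have hR : HasSum (Sum.elim (wG c a) (fun p => (z * q ^ a) * wP c a p))
      (GFa c a + (z * q ^ a) * Vse c a) :=
    (hasSum_wG c a).sumElim ((hasSum_wP c a).mul_left _)
  exact hR.unique hL

/-! ### Profile-specific facts -/

open CylindricPartition

lemma pA1 : (![4,0,1] : Fin 3 → ℕ) 0 = (![3,1,1] : Fin 3 → ℕ) 0 + 1 := by decide
lemma pA2 : (![3,1,1] : Fin 3 → ℕ) (0 + 1) = (![4,0,1] : Fin 3 → ℕ) (0 + 1) + 1 := by decide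
lemma pA3 : ∀ i : Fin 3, i ≠ 0 → i ≠ 0 + 1 →
    (![3,1,1] : Fin 3 → ℕ) i = (![4,0,1] : Fin 3 → ℕ) i := by decide

lemma pB1 : (![4,0,1] : Fin 3 → ℕ) 2 = (![5,0,0] : Fin 3 → ℕ) 2 + 1 := by decide
lemma pB2 : (![5,0,0] : Fin 3 → ℕ) (2 + 1) = (![4,0,1] : Fin 3 → ℕ) (2 + 1) + 1 := by decide
lemma pB3 : ∀ i : Fin 3, i ≠ 2 → i ≠ 2 + 1 →
    (![5,0,0] : Fin 3 → ℕ) i = (![4,0,1] : Fin 3 → ℕ) i := by decide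

lemma pC1 : (![5,0,0] : Fin 3 → ℕ) 0 = (![4,1,0] : Fin 3 → ℕ) 0 + 1 := by decide
lemma pC2 : (![4,1,0] : Fin 3 → ℕ) (0 + 1) = (![5,0,0] : Fin 3 → ℕ) (0 + 1) + 1 := by decide
lemma pC3 : ∀ i : Fin 3, i ≠ 0 → i ≠ 0 + 1 →
    (![4,1,0] : Fin 3 → ℕ) i = (![5,0,0] : Fin 3 → ℕ) i := by decide

lemma le401_10 (Λ : CylindricPartition 3 ![4,0,1]) : Λ.part 1 0 ≤ Λ.part 0 0 := by
  have h := Λ.cyl 0 0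
  rw [show ((0:Fin 3)+1) = 1 from by decide] at h
  rw [show 0 + (![4,0,1] : Fin 3 → ℕ) 1 = 0 from by decide] at h
  exact h

lemma le401_21 (Λ : CylindricPartition 3 ![4,0,1]) : Λ.part 2 1 ≤ Λ.part 1 0 := by
  have h := Λ.cyl 1 0
  rw [show ((1:Fin 3)+1) = 2 from by decide] at h
  rw [show 0 + (![4,0,1] : Fin 3 → ℕ) 2 = 1 from by decide] at h
  exact h

lemma le500_10 (Λ : CylindricPartition 3 ![5,0,0]) : Λ.part 1 0 ≤ Λ.part 0 0 := by
  have h := Λ.cyl 0 0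
  rw [show ((0:Fin 3)+1) = 1 from by decide] at h
  rw [show 0 + (![5,0,0] : Fin 3 → ℕ) 1 = 0 from by decide] at h
  exact h

lemma le500_20 (Λ : CylindricPartition 3 ![5,0,0]) : Λ.part 2 0 ≤ Λ.part 1 0 := by
  have h := Λ.cyl 1 0
  rw [show ((1:Fin 3)+1) = 2 from by decide] at h
  rw [show 0 + (![5,0,0] : Fin 3 → ℕ) 2 = 0 from by decide] at h
  exact h

lemma max401_le {Λ : CylindricPartition 3 ![4,0,1]} {T : ℕ}
    (hzero : Λ.part 0 0 ≤ T) (htwo : Λ.part 2 0 ≤ T) : Λ.maxPart ≤ T := by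
  rw [maxPart_le_iff]
  intro i
  fin_cases i
  · exact hzero
  · exact le_trans (le401_10 Λ) hzero
  · exact htwo

lemma max500_le {Λ : CylindricPartition 3 ![5,0,0]} {T : ℕ}
    (hzero : Λ.part 0 0 ≤ T) : Λ.maxPart ≤ T := by
  rw [maxPart_le_iff]
  intro i
  fin_cases i
  · exact hzero
  · exact le_trans (le500_10 Λ) hzero
  · exact le_trans (le_trans (le500_20 Λ) (le500_10 Λ)) hzero

lemma wP_mk (c : Fin 3 → ℕ) (a : ℕ) (Λ : CylindricPartition 3 c) (T : ℕ)
    (h : (Λ, T).1.maxPart ≤ (Λ, T).2) :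
    wP c a ⟨(Λ, T), h⟩ = z ^ T * q ^ (a * T + Λ.size) := rfl

/-! ### Equation (EI) -/

/-- Forward map for (EI). -/
noncomputable def eifun : (CPairs ![3,1,1] ⊕ CPairs ![4,0,1] ⊕ CPairs ![5,0,0]) → CPairs ![4,0,1]
  | .inl ⟨(Λ', T), hT⟩ =>
      ⟨(prepend ![4,0,1] ![3,1,1] 0 pA1 pA2 pA3 Λ' T hT, T),
        maxPart_prepend_le pA1 pA2 pA3 Λ' T hT⟩
  | .inr (.inl ⟨(Λ, T), hT⟩) => ⟨(Λ, T + 1), le_trans hT (Nat.le_succ _)⟩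
  | .inr (.inr ⟨(Λ'', S), hS⟩) =>
      ⟨(prepend ![4,0,1] ![5,0,0] 2 pB1 pB2 pB3 Λ'' (S + 1) (Nat.le_succ_of_le hS), S + 1),
        maxPart_prepend_le pB1 pB2 pB3 Λ'' (S + 1) (Nat.le_succ_of_le hS)⟩

/-- Inverse map for (EI). -/
noncomputable def einv : CPairs ![4,0,1] → (CPairs ![3,1,1] ⊕ CPairs ![4,0,1] ⊕ CPairs ![5,0,0])
  | ⟨(Λ, T), hT⟩ =>
      if h0 : Λ.part 0 0 = T then
        .inl ⟨(drop ![4,0,1] ![3,1,1] 0 pA1 pA2 pA3 Λ, T),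
          le_trans (maxPart_drop_le pA1 pA2 pA3 Λ) hT⟩
      else if h2 : Λ.part 2 0 = T then
        .inr (.inr ⟨(drop ![4,0,1] ![5,0,0] 2 pB1 pB2 pB3 Λ, T - 1), by
          show (drop ![4,0,1] ![5,0,0] 2 pB1 pB2 pB3 Λ).maxPart ≤ T - 1
          apply max500_le
          rw [part_drop_other pB1 pB2 pB3 Λ (show (0:Fin 3) ≠ 2 from by decide) 0]
          have l00 : Λ.part 0 0 ≤ T :=
            le_trans (Λ.part_zero_le_maxPart 0) (show Λ.maxPart ≤ T from hT)
          omega⟩)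
      else
        .inr (.inl ⟨(Λ, T - 1), by
          have hb : Λ.maxPart ≤ T := hT
          have l00 : Λ.part 0 0 ≤ T := le_trans (Λ.part_zero_le_maxPart 0) hb
          have l20 : Λ.part 2 0 ≤ T := le_trans (Λ.part_zero_le_maxPart 2) hb
          show Λ.maxPart ≤ T - 1
          exact max401_le (by omega) (by omega)⟩)

noncomputable def equivEI : (CPairs ![3,1,1] ⊕ CPairs ![4,0,1] ⊕ CPairs ![5,0,0]) ≃ CPairs ![4,0,1] where
  toFun := eifun
  invFun := einv
  left_inv x := by
    rcases x with ⟨⟨Λ', T⟩, hT⟩ | ⟨⟨Λ, T⟩, hT⟩ | ⟨⟨Λ'', S⟩, hS⟩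
    · simp only [eifun, einv]
      rw [dif_pos (part_prepend_zero pA1 pA2 pA3 Λ' T hT)]
      exact congrArg Sum.inl (CPairs.ext (drop_prepend pA1 pA2 pA3 Λ' T hT) rfl)
    · have hT' : Λ.maxPart ≤ T := hT
      have c0 : ¬ (Λ.part 0 0 = T + 1) := by
        have := le_trans (Λ.part_zero_le_maxPart 0) hT'; omega
      have c2 : ¬ (Λ.part 2 0 = T + 1) := by
        have := le_trans (Λ.part_zero_le_maxPart 2) hT'; omega
      simp only [eifun, einv]
      rw [dif_neg c0, dif_neg c2]
      exact congrArg Sum.inr (congrArg Sum.inl (CPairs.ext rfl (show T + 1 - 1 = T by omega)))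
    · have hS' : Λ''.maxPart ≤ S := hS
      have c0 : ¬ ((prepend ![4,0,1] ![5,0,0] 2 pB1 pB2 pB3 Λ'' (S + 1)
          (Nat.le_succ_of_le hS)).part 0 0 = S + 1) := by
        rw [part_prepend_other pB1 pB2 pB3 _ _ _ (show (0:Fin 3) ≠ 2 from by decide) 0]
        have := le_trans (Λ''.part_zero_le_maxPart 0) hS'
        omega
      have c2 : (prepend ![4,0,1] ![5,0,0] 2 pB1 pB2 pB3 Λ'' (S + 1)
          (Nat.le_succ_of_le hS)).part 2 0 = S + 1 :=
        part_prepend_zero pB1 pB2 pB3 _ _ _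
      simp only [eifun, einv]
      rw [dif_neg c0, dif_pos c2]
      exact congrArg Sum.inr (congrArg Sum.inr
        (CPairs.ext (drop_prepend pB1 pB2 pB3 Λ'' (S + 1) _) rfl))
  right_inv p := by
    obtain ⟨⟨Λ, T⟩, hT⟩ := p
    have hb : Λ.maxPart ≤ T := hT
    have l00 : Λ.part 0 0 ≤ T := le_trans (Λ.part_zero_le_maxPart 0) hb
    by_cases h0 : Λ.part 0 0 = T
    · simp only [einv]
      rw [dif_pos h0]
      simp only [eifun]
      exact CPairs.ext (prepend_drop pA1 pA2 pA3 Λ T h0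
        (le_trans (maxPart_drop_le pA1 pA2 pA3 Λ) hb)) rfl
    · by_cases h2 : Λ.part 2 0 = T
      · obtain ⟨T', rfl⟩ : ∃ T', T = T' + 1 := ⟨T - 1, by omega⟩
        simp only [einv]
        rw [dif_neg h0, dif_pos h2]
        simp only [eifun]
        exact CPairs.ext (prepend_drop pB1 pB2 pB3 Λ (T' + 1) h2
          (le_trans (maxPart_drop_le pB1 pB2 pB3 Λ) hb)) rfl
      · obtain ⟨T', rfl⟩ : ∃ T', T = T' + 1 := ⟨T - 1, by omega⟩
        simp only [einv]
        rw [dif_neg h0, dif_neg h2]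
        simp only [eifun]
        exact CPairs.ext rfl rfl

set_option maxHeartbeats 1000000 in
lemma EIeq : Vse ![4,0,1] 0
    = Vse ![3,1,1] 1 + (z * Vse ![4,0,1] 0 + (z * q) * Vse ![5,0,0] 1) := by
  have hL : HasSum (fun x => wP ![4,0,1] 0 (equivEI x)) (Vse ![4,0,1] 0) :=
    (Equiv.hasSum_iff equivEI).mpr (hasSum_wP _ _)
  have hfun : (fun x => wP ![4,0,1] 0 (equivEI x))
      = Sum.elim (wP ![3,1,1] 1) (Sum.elim (fun p => z * wP ![4,0,1] 0 p)
          (fun p => (z * q) * wP ![5,0,0] 1 p)) := by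
    funext x
    have he : ∀ y, equivEI y = eifun y := fun _ => rfl
    rcases x with ⟨⟨Λ', T⟩, hT⟩ | ⟨⟨Λ, T⟩, hT⟩ | ⟨⟨Λ'', S⟩, hS⟩
    · show _ = wP ![3,1,1] 1 ⟨(Λ', T), hT⟩
      simp only [Sum.elim_inl, he, eifun, wP_mk, size_prepend]
      ring
    · show _ = z * wP ![4,0,1] 0 ⟨(Λ, T), hT⟩
      simp only [Sum.elim_inr, Sum.elim_inl, he, eifun, wP_mk]
      ring
    · show _ = z * q * wP ![5,0,0] 1 ⟨(Λ'', S), hS⟩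
      simp only [Sum.elim_inr, Sum.elim_inr, he, eifun, wP_mk, size_prepend]
      ring
  rw [hfun] at hL
  have hR := (hasSum_wP ![3,1,1] 1).sumElim
    (((hasSum_wP ![4,0,1] 0).mul_left z).sumElim ((hasSum_wP ![5,0,0] 1).mul_left (z * q)))
  exact hL.unique hR

/-! ### Equation (EII) -/

noncomputable def eiifun : (CPairs ![4,1,0] ⊕ CPairs ![5,0,0]) → CPairs ![5,0,0]
  | .inl ⟨(Λ', T), hT⟩ =>
      ⟨(prepend ![5,0,0] ![4,1,0] 0 pC1 pC2 pC3 Λ' T hT, T),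
        maxPart_prepend_le pC1 pC2 pC3 Λ' T hT⟩
  | .inr ⟨(Λ, T), hT⟩ => ⟨(Λ, T + 1), le_trans hT (Nat.le_succ _)⟩

noncomputable def eiinv : CPairs ![5,0,0] → (CPairs ![4,1,0] ⊕ CPairs ![5,0,0])
  | ⟨(Λ, T), hT⟩ =>
      if h0 : Λ.part 0 0 = T then
        .inl ⟨(drop ![5,0,0] ![4,1,0] 0 pC1 pC2 pC3 Λ, T),
          le_trans (maxPart_drop_le pC1 pC2 pC3 Λ) hT⟩
      else
        .inr ⟨(Λ, T - 1), by
          have hb : Λ.maxPart ≤ T := hT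
          have l00 : Λ.part 0 0 ≤ T := le_trans (Λ.part_zero_le_maxPart 0) hb
          show Λ.maxPart ≤ T - 1
          exact max500_le (by omega)⟩

noncomputable def equivEII : (CPairs ![4,1,0] ⊕ CPairs ![5,0,0]) ≃ CPairs ![5,0,0] where
  toFun := eiifun
  invFun := eiinv
  left_inv x := by
    rcases x with ⟨⟨Λ', T⟩, hT⟩ | ⟨⟨Λ, T⟩, hT⟩
    · simp only [eiifun, eiinv]
      rw [dif_pos (part_prepend_zero pC1 pC2 pC3 Λ' T hT)]
      exact congrArg Sum.inl (CPairs.ext (drop_prepend pC1 pC2 pC3 Λ' T hT) rfl)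
    · have h2 : Λ.maxPart ≤ T := hT
      have c0 : ¬ (Λ.part 0 0 = T + 1) := by
        have := le_trans (Λ.part_zero_le_maxPart 0) h2; omega
      simp only [eiifun, eiinv]
      rw [dif_neg c0]
      exact congrArg Sum.inr (CPairs.ext rfl (show T + 1 - 1 = T by omega))
  right_inv p := by
    obtain ⟨⟨Λ, T⟩, hT⟩ := p
    have hb : Λ.maxPart ≤ T := hT
    have l00 : Λ.part 0 0 ≤ T := le_trans (Λ.part_zero_le_maxPart 0) hb
    by_cases h0 : Λ.part 0 0 = T
    · simp only [eiinv]
      rw [dif_pos h0]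
      simp only [eiifun]
      exact CPairs.ext (prepend_drop pC1 pC2 pC3 Λ T h0
        (le_trans (maxPart_drop_le pC1 pC2 pC3 Λ) hb)) rfl
    · obtain ⟨T', rfl⟩ : ∃ T', T = T' + 1 := ⟨T - 1, by omega⟩
      simp only [eiinv]
      rw [dif_neg h0]
      simp only [eiifun]
      exact CPairs.ext rfl rfl

set_option maxHeartbeats 1000000 in
lemma EIIeq : Vse ![5,0,0] 1 = Vse ![4,1,0] 2 + (z * q) * Vse ![5,0,0] 1 := by
  have hL : HasSum (fun x => wP ![5,0,0] 1 (equivEII x)) (Vse ![5,0,0] 1) :=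
    (Equiv.hasSum_iff equivEII).mpr (hasSum_wP _ _)
  have hfun : (fun x => wP ![5,0,0] 1 (equivEII x))
      = Sum.elim (wP ![4,1,0] 2) (fun p => (z * q) * wP ![5,0,0] 1 p) := by
    funext x
    have he : ∀ y, equivEII y = eiifun y := fun _ => rfl
    rcases x with ⟨⟨Λ', T⟩, hT⟩ | ⟨⟨Λ, T⟩, hT⟩
    · show _ = wP ![4,1,0] 2 ⟨(Λ', T), hT⟩
      simp only [Sum.elim_inl, he, eiifun, wP_mk, size_prepend]
      ring
    · show _ = z * q * wP ![5,0,0] 1 ⟨(Λ, T), hT⟩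
      simp only [Sum.elim_inr, he, eiifun, wP_mk]
      ring
  rw [hfun] at hL
  have hR := (hasSum_wP ![4,1,0] 2).sumElim ((hasSum_wP ![5,0,0] 1).mul_left (z * q))
  exact hL.unique hR

/-! ### The infinite product: multipliability and the peel-off identity -/

/-- `S` has all coefficients of `q`-degree `< k` equal to zero. -/
def HiDeg (k : ℕ) (S : MvPowerSeries (Fin 2) ℚ) : Prop :=
  ∀ e : Fin 2 →₀ ℕ, e 1 < k → S e = 0

lemma HiDeg.zero (k : ℕ) : HiDeg k 0 := fun _ _ => rfl

lemma HiDeg.add {k : ℕ} {S T : MvPowerSeries (Fin 2) ℚ} (hS : HiDeg k S) (hT : HiDeg k T) :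
    HiDeg k (S + T) := by
  intro e he
  show S e + T e = 0
  rw [hS e he, hT e he, add_zero]

lemma HiDeg.neg {k : ℕ} {S : MvPowerSeries (Fin 2) ℚ} (hS : HiDeg k S) : HiDeg k (-S) := by
  intro e he
  show -(S e) = 0
  rw [hS e he, neg_zero]

lemma HiDeg.mul_left {k : ℕ} (A : MvPowerSeries (Fin 2) ℚ) {S : MvPowerSeries (Fin 2) ℚ}
    (hS : HiDeg k S) : HiDeg k (A * S) := by
  intro e he
  rw [show (A * S) e = MvPowerSeries.coeff e (A * S) from rfl, MvPowerSeries.coeff_mul]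
  apply Finset.sum_eq_zero
  intro x hx
  have hxe : x.1 + x.2 = e := Finset.HasAntidiagonal.mem_antidiagonal.1 hx
  have h2 : x.2 1 ≤ e 1 := by
    have := congrArg (fun f : Fin 2 →₀ ℕ => f 1) hxe
    simp only [Finsupp.add_apply] at this
    omega
  rw [show MvPowerSeries.coeff x.2 S = S x.2 from rfl, hS x.2 (by omega), mul_zero]

lemma HiDeg.q_pow {k j : ℕ} (h : k ≤ j) : HiDeg k (q ^ j) := by
  intro e he
  rw [q, MvPowerSeries.X_pow_eq,
    show (MvPowerSeries.monomial (Finsupp.single 1 j) 1) e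
      = MvPowerSeries.coeff e (MvPowerSeries.monomial (Finsupp.single 1 j) (1 : ℚ)) from rfl,
    MvPowerSeries.coeff_monomial, if_neg]
  intro hcon
  have := congrArg (fun f : Fin 2 →₀ ℕ => f 1) hcon
  simp only [Finsupp.single_eq_same] at this
  omega

lemma prod_one_add_hi {k : ℕ} (s : Finset ℕ) (f : ℕ → MvPowerSeries (Fin 2) ℚ)
    (hf : ∀ m ∈ s, HiDeg k (f m)) :
    ∃ R, (∏ m ∈ s, (1 + f m)) = 1 + R ∧ HiDeg k R := by
  classical
  induction s using Finset.induction_on with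
  | empty => exact ⟨0, by simp, HiDeg.zero k⟩
  | @insert a s' ha ih =>
    obtain ⟨R, hR, hRhi⟩ := ih (fun m hm' => hf m (Finset.mem_insert_of_mem hm'))
    refine ⟨f a + R + f a * R, ?_, ?_⟩
    · rw [Finset.prod_insert ha, hR]
      ring
    · exact ((hf a (Finset.mem_insert_self a s')).add hRhi).add
        (HiDeg.mul_left (f a) hRhi)

lemma hasProd_poch (Z : MvPowerSeries (Fin 2) ℚ) :
    HasProd (fun m => 1 - Z * q ^ (m + 1))
      (show MvPowerSeries (Fin 2) ℚ from
        fun d => (∏ m ∈ Finset.range (d 1 + 1), (1 - Z * q ^ (m + 1))) d) := by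
  rw [HasProd]
  apply tendsto_pi_nhds.2
  intro d
  apply Filter.Tendsto.congr' _ tendsto_const_nhds
  rw [Filter.eventuallyEq_iff_exists_mem]
  refine ⟨{s | Finset.range (d 1 + 1) ⊆ s}, Filter.mem_atTop _, ?_⟩
  intro s hs
  show (∏ m ∈ Finset.range (d 1 + 1), (1 - Z * q ^ (m + 1))) d
    = (∏ m ∈ s, (1 - Z * q ^ (m + 1))) d
  have hsplit : s = Finset.range (d 1 + 1) ∪ (s \ Finset.range (d 1 + 1)) :=
    (Finset.union_sdiff_of_subset hs).symm
  rw [hsplit, Finset.prod_union Finset.disjoint_sdiff]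
  have hall : ∀ t : Finset ℕ, (∏ m ∈ t, ((1 : MvPowerSeries (Fin 2) ℚ) - Z * q ^ (m + 1)))
      = ∏ m ∈ t, (1 + -(Z * q ^ (m + 1))) :=
    fun t => Finset.prod_congr rfl fun m _ => by ring
  have hfhi : ∀ m ∈ s \ Finset.range (d 1 + 1), HiDeg (d 1 + 1) (-(Z * q ^ (m + 1))) := by
    intro m hm
    have hmge : d 1 + 1 ≤ m + 1 := by
      have := (Finset.mem_sdiff.1 hm).2
      simp only [Finset.mem_range, not_lt] at this
      omega
    exact (HiDeg.mul_left Z (HiDeg.q_pow hmge)).neg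
  obtain ⟨R, hR, hRhi⟩ := prod_one_add_hi (k := d 1 + 1) (s \ Finset.range (d 1 + 1))
    (fun m => -(Z * q ^ (m + 1))) hfhi
  rw [hall (Finset.range (d 1 + 1)), hall (s \ Finset.range (d 1 + 1)), hR, mul_add, mul_one]
  set P := ∏ m ∈ Finset.range (d 1 + 1),
    ((1 : MvPowerSeries (Fin 2) ℚ) + -(Z * q ^ (m + 1))) with hP
  rw [show (P + P * R) d = P d + (P * R) d from rfl,
    HiDeg.mul_left P hRhi d (by omega), add_zero]

lemma multipliable_poch (Z : MvPowerSeries (Fin 2) ℚ) :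
    Multipliable (fun m => 1 - Z * q ^ (m + 1)) :=
  ⟨_, hasProd_poch Z⟩

lemma tprod_peel (Z : MvPowerSeries (Fin 2) ℚ) :
    (∏' m : ℕ, (1 - Z * q ^ (m + 1)))
      = (1 - Z * q) * ∏' m : ℕ, (1 - (Z * q) * q ^ (m + 1)) := by
  have h0 : Multipliable (fun m : ℕ => 1 - Z * q ^ ((m + 1) + 1)) := by
    have he : (fun m : ℕ => 1 - (Z * q) * q ^ (m + 1))
        = (fun m : ℕ => 1 - Z * q ^ ((m + 1) + 1)) := funext fun m => by ring
    exact he ▸ multipliable_poch (Z * q)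
  have hmain := tprod_eq_zero_mul' (f := fun m => 1 - Z * q ^ (m + 1)) h0
  rw [hmain]
  have hb : (fun m : ℕ => 1 - Z * q ^ (m + 1)) 0 = 1 - Z * q := by
    show 1 - Z * q ^ (0 + 1) = 1 - Z * q
    rw [zero_add, pow_one]
  simp only [hb, zero_add, pow_one]
  congr 1
  exact tprod_congr fun m => by
    show 1 - Z * q ^ ((m + 1) + 1) = 1 - (Z * q) * q ^ (m + 1)
    ring

/-! ### Final assembly -/

/-- The refined relation `G_{(4,0,1)}(z,q) = G_{(3,1,1)}(zq,q) + zq·G_{(4,1,0)}(zq²,q)`. -/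
theorem cylG_401_rel :
    cylG 3 ![4, 0, 1] z
      = cylG 3 ![3, 1, 1] (z * q) + z * q * cylG 3 ![4, 1, 0] (z * q ^ 2) := by
  have h401 : cylGF 3 ![4,0,1] z = GFa ![4,0,1] 0 := by
    rw [← cylGF_eq_GFa]
    congr 1
    rw [pow_zero, mul_one]
  have h311 : cylGF 3 ![3,1,1] (z * q) = GFa ![3,1,1] 1 := by
    rw [← cylGF_eq_GFa]
    congr 1
    rw [pow_one]
  have h410 : cylGF 3 ![4,1,0] (z * q ^ 2) = GFa ![4,1,0] 2 := cylGF_eq_GFa _ 2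
  have e1 := E0eq ![4,0,1] 0
  have e2 := E0eq ![3,1,1] 1
  have e3 := E0eq ![4,1,0] 2
  have e4 := EIeq
  have e5 := EIIeq
  have g1 : GFa ![4,0,1] 0 = Vse ![3,1,1] 1 + (z * q) * Vse ![5,0,0] 1 := by
    linear_combination e1 + e4
  have g2 : GFa ![3,1,1] 1 = Vse ![3,1,1] 1 - (z * q) * Vse ![3,1,1] 1 := by
    linear_combination e2
  have g3 : GFa ![4,1,0] 2 = Vse ![4,1,0] 2 - (z * q ^ 2) * Vse ![4,1,0] 2 := by
    linear_combination e3
  have g5 : Vse ![4,1,0] 2 = Vse ![5,0,0] 1 - (z * q) * Vse ![5,0,0] 1 := by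
    linear_combination -e5
  have p1 := tprod_peel z
  have p2 := tprod_peel (z * q)
  have palign : (∏' m : ℕ, (1 - ((z * q) * q) * q ^ (m + 1)))
      = (∏' m : ℕ, (1 - (z * q ^ 2) * q ^ (m + 1))) :=
    tprod_congr fun m => by ring
  simp only [cylG]
  rw [h401, h311, h410, g1, g2, g3, g5, p1, p2, palign]
  ring
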